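/- If (c1, c2, S) is a Kempe component of a coloring σ of a graph G, then there are exactly |S| pairs (u, c) ∈ V(G) × [k] such that S = S_σ(u, c); consequently, the sum of |S| over all Kempe components S in the multiset K_σ equals k·n, where n = |V(G)|. -/

import Mathlib

open scoped Classical

/-- One step of a `(c₁,c₂)`-alternating path: an edge whose endpoints receive the
colors `c₁` and `c₂` (in one of the two orders). -/
def altStep {V : Type*} {k : ℕ} (G : SimpleGraph V) (σ : V → Fin k) (c₁ c₂ : Fin k)
    (x y : V) : Prop :=
  G.Adj x y ∧ ((σ x = c₁ ∧ σ y = c₂) ∨ (σ x = c₂ ∧ σ y = c₁))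

/-- `S_σ(u,c)`: the set of vertices joined to `u` by a `(σ u, c)`-alternating path. -/
def kempeSet {V : Type*} {k : ℕ} (G : SimpleGraph V) (σ : V → Fin k) (u : V) (c : Fin k) :
    Set V :=
  {w | Relation.ReflTransGen (altStep G σ (σ u) c) u w}

/-- The Kempe component determined by `(u,c)`: the (unordered) pair of colors together
with the vertex set `S_σ(u,c)`. -/
noncomputable def kempeComp {V : Type*} {k : ℕ} (G : SimpleGraph V) (σ : V → Fin k)
    (u : V) (c : Fin k) : Finset (Fin k) × Set V :=
  ({σ u, c}, kempeSet G σ u c)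

lemma altStep_symm {V : Type*} {k : ℕ} (G : SimpleGraph V) (σ : V → Fin k) (c₁ c₂ : Fin k) :
    Symmetric (altStep G σ c₁ c₂) := by
  intro x y ⟨hadj, h⟩
  exact ⟨hadj.symm, by tauto⟩

lemma altStep_comm {V : Type*} {k : ℕ} (G : SimpleGraph V) (σ : V → Fin k) (c₁ c₂ : Fin k) :
    altStep G σ c₁ c₂ = altStep G σ c₂ c₁ := by
  ext x y
  unfold altStep
  tauto

lemma reach_eq {V : Type*} {R : V → V → Prop} (hs : Symmetric R) {u v : V}
    (h : Relation.ReflTransGen R u v) :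
    {w | Relation.ReflTransGen R v w} = {w | Relation.ReflTransGen R u w} := by
  have hsym : Symmetric (Relation.ReflTransGen R) := by
    haveI : Std.Symm R := ⟨hs⟩
    exact fun a b h => Std.Symm.symm a b h
  ext w
  exact ⟨fun hw => h.trans hw, fun hw => (hsym h).trans hw⟩

lemma color_mem {V : Type*} {k : ℕ} {G : SimpleGraph V} {σ : V → Fin k} {u v : V} {c : Fin k}
    (h : v ∈ kempeSet G σ u c) : σ v = σ u ∨ σ v = c := by
  induction h with
  | refl => left; rfl
  | tail _ hstep _ => rcases hstep.2 with ⟨_, h2⟩ | ⟨_, h2⟩ <;> [exact Or.inr h2; exact Or.inl h2]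

lemma fiber_eq {V : Type*} {k : ℕ} (G : SimpleGraph V) (σ : V → Fin k) (u : V) (c : Fin k) :
    {p : V × Fin k | kempeComp G σ p.1 p.2 = kempeComp G σ u c}
      = (fun v => (v, if σ v = σ u then c else σ u)) '' (kempeSet G σ u c) := by
  ext ⟨v, d⟩
  simp only [Set.mem_setOf_eq, Set.mem_image, Prod.mk.injEq]
  constructor
  · intro h
    have h1 : ({σ v, d} : Finset (Fin k)) = {σ u, c} := congrArg Prod.fst h
    have h2 : kempeSet G σ v d = kempeSet G σ u c := congrArg Prod.snd h
    have hv : v ∈ kempeSet G σ u c := by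
      rw [← h2]; exact Relation.ReflTransGen.refl
    refine ⟨v, hv, rfl, ?_⟩
    have hσv : σ v ∈ ({σ u, c} : Finset (Fin k)) := by rw [← h1]; simp
    have hd : d ∈ ({σ u, c} : Finset (Fin k)) := by rw [← h1]; simp
    have hσu : σ u ∈ ({σ v, d} : Finset (Fin k)) := by rw [h1]; simp
    have hc : (c : Fin k) ∈ ({σ v, d} : Finset (Fin k)) := by rw [h1]; simp
    simp only [Finset.mem_insert, Finset.mem_singleton] at hσv hd hσu hc
    by_cases hvu : σ v = σ u
    · simp only [hvu, if_true]
      rcases hc with hc | hc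
      · rcases hd with hd | hd
        · rw [hc, hvu, ← hd]
        · exact hd.symm
      · exact hc
    · simp only [hvu, if_false]
      rcases hσu with h' | h'
      · exact absurd h'.symm hvu
      · exact h'
  · rintro ⟨w, hw, rfl, rfl⟩
    have hA := color_mem hw
    unfold kempeComp
    by_cases hvu : σ w = σ u
    · simp only [hvu, if_true]
      refine Prod.ext ?_ ?_
      · simp [hvu]
      · show kempeSet G σ w c = kempeSet G σ u c
        unfold kempeSet
        rw [hvu]
        exact reach_eq (altStep_symm G σ (σ u) c) hw
    · have hwc : σ w = c := hA.resolve_left hvu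
      simp only [hvu, if_false]
      refine Prod.ext ?_ ?_
      · show ({σ w, σ u} : Finset (Fin k)) = {σ u, c}
        rw [hwc, Finset.pair_comm]
      · show kempeSet G σ w (σ u) = kempeSet G σ u c
        unfold kempeSet
        rw [hwc, altStep_comm]
        exact reach_eq (altStep_symm G σ (σ u) c) hw

/-- For any Kempe component `(c₁,c₂,S)` of `σ` there are exactly `|S|` pairs
`(u,c) ∈ V(G) × [k]` with `S = S_σ(u,c)` (as components, i.e. as color-pair/set pairs);
consequently the sum of `|S|` over the multiset `K_σ` of Kempe components is `k·n`. -/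
theorem stmt0 {V : Type*} [Fintype V] (G : SimpleGraph V) (k : ℕ) (σ : V → Fin k) :
    (∀ (u : V) (c : Fin k),
      {p : V × Fin k | kempeComp G σ p.1 p.2 = kempeComp G σ u c}.ncard
        = (kempeComp G σ u c).2.ncard) ∧
    ∑ K ∈ Finset.univ.image (fun p : V × Fin k => kempeComp G σ p.1 p.2), K.2.ncard
      = k * Fintype.card V := by
  have hpart1 : ∀ (u : V) (c : Fin k),
      {p : V × Fin k | kempeComp G σ p.1 p.2 = kempeComp G σ u c}.ncard
        = (kempeComp G σ u c).2.ncard := by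
    intro u c
    rw [fiber_eq]
    have hinj : Function.Injective (fun v : V => (v, if σ v = σ u then c else σ u)) := by
      intro a b hab
      exact congrArg Prod.fst hab
    rw [Set.ncard_image_of_injective _ hinj]
    rfl
  refine ⟨hpart1, ?_⟩
  classical
  set f : V × Fin k → Finset (Fin k) × Set V := fun p => kempeComp G σ p.1 p.2 with hf
  have hsum : ∑ K ∈ Finset.univ.image f, K.2.ncard
      = ∑ K ∈ Finset.univ.image f, (Finset.univ.filter fun p => f p = K).card := by
    refine Finset.sum_congr rfl ?_
    intro K hK
    obtain ⟨p, -, hp⟩ := Finset.mem_image.mp hK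
    subst hp
    have := hpart1 p.1 p.2
    rw [← this, ← Set.ncard_coe_finset]
    congr 1
    ext q
    simp [hf]
  rw [hsum, ← Finset.card_eq_sum_card_image f Finset.univ]
  simp [Fintype.card_prod, mul_comm]
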